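/- Let 𝒢 = (G_n,‖·‖_n)_{n∈ℕ} be a family of metric groups with sup_n sup_{g∈G_n} ‖g‖_n < ∞, and 𝒰 a nonprincipal ultrafilter on ℕ. If the metric ultraproduct 𝒢*_met is perfect (every element is a product of commutators), then 𝒢*_met is uniformly perfect: there is N ∈ ℕ such that every element of 𝒢*_met is a product of N commutators. -/

import Mathlib

open Filter Set Pointwise ENNReal

/-- `CN N g` : the set of all products of at most `N` conjugates of `g` and `g⁻¹`. -/
def CN {H : Type*} [Group H] (N : ℕ) (g : H) : Set H :=
  ⋃ m ≤ N, ({x | IsConj g x} ∪ {x | IsConj g⁻¹ x}) ^ m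

/-- A family of groups equipped with conjugation-invariant pseudo-norms with values in `[0,∞]`. -/
structure PMFamily where
  G : ℕ → Type
  grp : ∀ n, Group (G n)
  ν : ∀ n, G n → ℝ≥0∞
  norm_one : ∀ n, ν n 1 = 0
  norm_mul : ∀ n (g h : G n), ν n (g * h) ≤ ν n g + ν n h
  norm_inv : ∀ n (g : G n), ν n g⁻¹ = ν n g
  norm_conj : ∀ n (g h : G n), ν n (h * g * h⁻¹) = ν n g

attribute [instance] PMFamily.grp

namespace PMFamily

variable (𝒢 : PMFamily) (U : Ultrafilter ℕ)

/-- The subgroup of infinitesimal sequences. -/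
def E : Subgroup (∀ n, 𝒢.G n) where
  carrier := {g | ∀ ε : ℝ≥0∞, 0 < ε → {n | 𝒢.ν n (g n) < ε} ∈ U}
  one_mem' := by
    intro ε hε
    have h : {n | 𝒢.ν n ((1 : ∀ n, 𝒢.G n) n) < ε} = Set.univ := by
      ext n; simpa [𝒢.norm_one n] using hε
    show {n | 𝒢.ν n ((1 : ∀ n, 𝒢.G n) n) < ε} ∈ U
    rw [h]
    exact Filter.univ_mem
  mul_mem' := by
    intro g h hg hh ε hε
    have h2 : (0 : ℝ≥0∞) < ε / 2 := ENNReal.half_pos hε.ne'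
    have key : {n | 𝒢.ν n (g n) < ε / 2} ∩ {n | 𝒢.ν n (h n) < ε / 2} ⊆
        {n | 𝒢.ν n ((g * h) n) < ε} := by
      rintro n ⟨h1, h1'⟩
      simp only [Set.mem_setOf_eq] at h1 h1' ⊢
      calc 𝒢.ν n ((g * h) n) = 𝒢.ν n (g n * h n) := rfl
        _ ≤ 𝒢.ν n (g n) + 𝒢.ν n (h n) := 𝒢.norm_mul n _ _
        _ < ε / 2 + ε / 2 := ENNReal.add_lt_add h1 h1'
        _ = ε := ENNReal.add_halves ε
    exact Filter.mem_of_superset (Filter.inter_mem (hg _ h2) (hh _ h2)) key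
  inv_mem' := by
    intro g hg ε hε
    have h : {n | 𝒢.ν n (g⁻¹ n) < ε} = {n | 𝒢.ν n (g n) < ε} := by
      ext n; simp only [Set.mem_setOf_eq, Pi.inv_apply, 𝒢.norm_inv n]
    show {n | 𝒢.ν n (g⁻¹ n) < ε} ∈ U
    rw [h]
    exact hg ε hε

theorem mem_E {g : ∀ n, 𝒢.G n} :
    g ∈ 𝒢.E U ↔ ∀ ε : ℝ≥0∞, 0 < ε → {n | 𝒢.ν n (g n) < ε} ∈ U := Iff.rfl

instance normal_E : (𝒢.E U).Normal := by
  constructor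
  intro g hg h
  rw [mem_E] at hg ⊢
  intro ε hε
  have heq : {n | 𝒢.ν n ((h * g * h⁻¹) n) < ε} = {n | 𝒢.ν n (g n) < ε} := by
    ext n
    simp only [Set.mem_setOf_eq, Pi.mul_apply, Pi.inv_apply, 𝒢.norm_conj n]
  rw [heq]
  exact hg ε hε

/-- The metric ultraproduct. -/
abbrev Q := (∀ n, 𝒢.G n) ⧸ 𝒢.E U

/-- The limit of the norms along the ultrafilter, on the product group. -/
noncomputable def pnorm (g : ∀ n, 𝒢.G n) : ℝ≥0∞ :=
  Filter.limsup (fun n => 𝒢.ν n (g n)) U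

/-- The induced norm on the metric ultraproduct. -/
noncomputable def qnorm (x : 𝒢.Q U) : ℝ≥0∞ := 𝒢.pnorm U (Quotient.out x)

/-- The open ball of radius `ε` around the identity in the metric ultraproduct. -/
def ball (ε : ℝ≥0∞) : Set (𝒢.Q U) := {x | 𝒢.qnorm U x < ε}

/-- Metrically internal subsets of the metric ultraproduct. -/
def internalSet (Xn : ∀ n, Set (𝒢.G n)) : Set (𝒢.Q U) :=
  (QuotientGroup.mk : (∀ n, 𝒢.G n) → 𝒢.Q U) '' {g | ∀ n, g n ∈ Xn n}

/-- The finitary subgroup of the metric ultraproduct: classes of uniformly bounded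
sequences (equivalently, elements of finite norm). -/
def finSubgroup : Subgroup (𝒢.Q U) where
  carrier := {x | ∃ g : ∀ n, 𝒢.G n, QuotientGroup.mk g = x ∧
    ∃ C : ℝ≥0∞, C ≠ ⊤ ∧ ∀ n, 𝒢.ν n (g n) ≤ C}
  one_mem' := ⟨1, rfl, 0, by simp, fun n => by simp [𝒢.norm_one n]⟩
  mul_mem' := by
    rintro x y ⟨g, rfl, C, hC, hg⟩ ⟨h, rfl, D, hD, hh⟩
    refine ⟨g * h, rfl, C + D, ENNReal.add_ne_top.mpr ⟨hC, hD⟩, fun n => ?_⟩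
    exact le_trans (𝒢.norm_mul n (g n) (h n)) (add_le_add (hg n) (hh n))
  inv_mem' := by
    rintro x ⟨g, rfl, C, hC, hg⟩
    exact ⟨g⁻¹, rfl, C, hC, fun n => by rw [Pi.inv_apply, 𝒢.norm_inv n]; exact hg n⟩

end PMFamily
section AuxLimsup

open Filter

variable {U : Ultrafilter ℕ}

private lemma limsup_le_of_memU {f : ℕ → ℝ≥0∞} {a : ℝ≥0∞}
    (h : {n | f n ≤ a} ∈ U) : Filter.limsup f U ≤ a :=
  Filter.limsup_le_of_le (by isBoundedDefault) h

private lemma memU_of_limsup_lt {f : ℕ → ℝ≥0∞} {a : ℝ≥0∞}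
    (h : Filter.limsup f U < a) : {n | f n < a} ∈ U :=
  Filter.eventually_lt_of_limsup_lt h

private lemma limsup_eq_zero_of_small {f : ℕ → ℝ≥0∞}
    (h : ∀ ε : ℝ≥0∞, 0 < ε → {n | f n < ε} ∈ U) : Filter.limsup f U = 0 := by
  refine le_antisymm (ENNReal.le_of_forall_pos_le_add fun ε hε _ => ?_) zero_le
  have hε' : (0 : ℝ≥0∞) < ε := by exact_mod_cast hε
  rw [zero_add]
  exact limsup_le_of_memU (Filter.mem_of_superset (h ε hε') fun n hn => le_of_lt (show f n < _ from hn))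

private lemma limsup_add_le' (f g : ℕ → ℝ≥0∞) :
    Filter.limsup (fun n => f n + g n) U ≤ Filter.limsup f U + Filter.limsup g U := by
  rcases eq_top_or_lt_top (Filter.limsup f U) with hf | hf
  · rw [hf]; simp
  rcases eq_top_or_lt_top (Filter.limsup g U) with hg | hg
  · rw [hg]; simp
  refine ENNReal.le_of_forall_pos_le_add fun ε hε _ => ?_
  have hε2 : (0 : ℝ≥0∞) < (ε : ℝ≥0∞) / 2 := ENNReal.half_pos (by exact_mod_cast hε.ne')
  have h1 : {n | f n < Filter.limsup f U + ε / 2} ∈ U :=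
    memU_of_limsup_lt (ENNReal.lt_add_right hf.ne hε2.ne')
  have h2 : {n | g n < Filter.limsup g U + ε / 2} ∈ U :=
    memU_of_limsup_lt (ENNReal.lt_add_right hg.ne hε2.ne')
  refine limsup_le_of_memU (Filter.mem_of_superset (Filter.inter_mem h1 h2) ?_)
  rintro n ⟨hn1, hn2⟩
  calc f n + g n ≤ (Filter.limsup f U + ε / 2) + (Filter.limsup g U + ε / 2) :=
        add_le_add (le_of_lt hn1) (le_of_lt hn2)
    _ = Filter.limsup f U + Filter.limsup g U + ε := by
        rw [add_add_add_comm, ENNReal.add_halves]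

end AuxLimsup
namespace PMFamily

variable (𝒢 : PMFamily) (U : Ultrafilter ℕ)

lemma pnorm_def (g : ∀ n, 𝒢.G n) :
    𝒢.pnorm U g = Filter.limsup (fun n => 𝒢.ν n (g n)) U := rfl

lemma pnorm_of_E {e : ∀ n, 𝒢.G n} (he : e ∈ 𝒢.E U) : 𝒢.pnorm U e = 0 :=
  limsup_eq_zero_of_small fun ε hε => he ε hε

lemma pnorm_mul_le (g h : ∀ n, 𝒢.G n) :
    𝒢.pnorm U (g * h) ≤ 𝒢.pnorm U g + 𝒢.pnorm U h := by
  refine le_trans ?_ (limsup_add_le' (fun n => 𝒢.ν n (g n)) (fun n => 𝒢.ν n (h n)))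
  refine Filter.limsup_le_limsup (Filter.Eventually.of_forall fun n => ?_)
  exact 𝒢.norm_mul n (g n) (h n)

lemma pnorm_inv (g : ∀ n, 𝒢.G n) : 𝒢.pnorm U g⁻¹ = 𝒢.pnorm U g := by
  simp only [pnorm_def]
  congr 1
  funext n
  exact 𝒢.norm_inv n (g n)

lemma pnorm_congr {g h : ∀ n, 𝒢.G n} (hgh : g⁻¹ * h ∈ 𝒢.E U) :
    𝒢.pnorm U g = 𝒢.pnorm U h := by
  refine le_antisymm ?_ ?_
  · have : g = h * (g⁻¹ * h)⁻¹ := by group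
    calc 𝒢.pnorm U g = 𝒢.pnorm U (h * (g⁻¹ * h)⁻¹) := by rw [← this]
      _ ≤ 𝒢.pnorm U h + 𝒢.pnorm U (g⁻¹ * h)⁻¹ := 𝒢.pnorm_mul_le U _ _
      _ = 𝒢.pnorm U h := by
          rw [𝒢.pnorm_inv U, 𝒢.pnorm_of_E U hgh, add_zero]
  · have : h = g * (g⁻¹ * h) := by group
    calc 𝒢.pnorm U h = 𝒢.pnorm U (g * (g⁻¹ * h)) := by rw [← this]
      _ ≤ 𝒢.pnorm U g + 𝒢.pnorm U (g⁻¹ * h) := 𝒢.pnorm_mul_le U _ _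
      _ = 𝒢.pnorm U g := by rw [𝒢.pnorm_of_E U hgh, add_zero]

lemma qnorm_mk (g : ∀ n, 𝒢.G n) :
    𝒢.qnorm U (QuotientGroup.mk g : 𝒢.Q U) = 𝒢.pnorm U g := by
  refine (𝒢.pnorm_congr U ?_).symm
  exact QuotientGroup.eq.mp (QuotientGroup.out_eq' (QuotientGroup.mk g : 𝒢.Q U)).symm

lemma qnorm_one : 𝒢.qnorm U (1 : 𝒢.Q U) = 0 := by
  have : ((1 : ∀ n, 𝒢.G n) : 𝒢.Q U) = 1 := QuotientGroup.mk_one _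
  rw [← this, qnorm_mk]
  exact 𝒢.pnorm_of_E U (one_mem _)

lemma qnorm_mul_le (x y : 𝒢.Q U) :
    𝒢.qnorm U (x * y) ≤ 𝒢.qnorm U x + 𝒢.qnorm U y := by
  refine QuotientGroup.induction_on x fun g => QuotientGroup.induction_on y fun h => ?_
  rw [← QuotientGroup.mk_mul, qnorm_mk, qnorm_mk, qnorm_mk]
  exact 𝒢.pnorm_mul_le U g h

lemma qnorm_inv (x : 𝒢.Q U) : 𝒢.qnorm U x⁻¹ = 𝒢.qnorm U x := by
  refine QuotientGroup.induction_on x fun g => ?_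
  rw [← QuotientGroup.mk_inv, qnorm_mk, qnorm_mk]
  exact 𝒢.pnorm_inv U g

noncomputable instance instPEMSQ : PseudoEMetricSpace (𝒢.Q U) where
  edist x y := 𝒢.qnorm U (x⁻¹ * y)
  edist_self x := by simpa using 𝒢.qnorm_one U
  edist_comm x y := show 𝒢.qnorm U (x⁻¹ * y) = 𝒢.qnorm U (y⁻¹ * x) by
    rw [show 𝒢.qnorm U (x⁻¹ * y) = 𝒢.qnorm U (x⁻¹ * y)⁻¹ from (𝒢.qnorm_inv U _).symm,
      show (x⁻¹ * y)⁻¹ = y⁻¹ * x by group]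
  edist_triangle x y z :=
    show 𝒢.qnorm U (x⁻¹ * z) ≤ 𝒢.qnorm U (x⁻¹ * y) + 𝒢.qnorm U (y⁻¹ * z) by
    rw [show x⁻¹ * z = (x⁻¹ * y) * (y⁻¹ * z) by group]
    exact 𝒢.qnorm_mul_le U _ _

lemma edist_def (x y : 𝒢.Q U) : edist x y = 𝒢.qnorm U (x⁻¹ * y) := rfl

lemma edist_mk (g h : ∀ n, 𝒢.G n) :
    edist (QuotientGroup.mk g : 𝒢.Q U) (QuotientGroup.mk h) =
      Filter.limsup (fun n => 𝒢.ν n ((g n)⁻¹ * h n)) U := by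
  rw [edist_def, ← QuotientGroup.mk_inv, ← QuotientGroup.mk_mul, qnorm_mk]
  rfl

end PMFamily
namespace PMFamily

variable (𝒢 : PMFamily) (U : Ultrafilter ℕ)

/-- The set of commutators in `G n`. -/
def Kn (n : ℕ) : Set (𝒢.G n) := {x | ∃ a b, x = a⁻¹ * b⁻¹ * a * b}

/-- The set of commutators in the metric ultraproduct. -/
def SQ : Set (𝒢.Q U) := {x | ∃ a b, x = a⁻¹ * b⁻¹ * a * b}

lemma one_mem_Kn (n : ℕ) : (1 : 𝒢.G n) ∈ 𝒢.Kn n := ⟨1, 1, by group⟩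

lemma one_mem_Kn_pow (n N : ℕ) : (1 : 𝒢.G n) ∈ 𝒢.Kn n ^ N :=
  Set.pow_subset_pow_right (𝒢.one_mem_Kn n) (Nat.zero_le N) (by simp)

lemma Kn_pow_mono (n : ℕ) {M M' : ℕ} (h : M ≤ M') : 𝒢.Kn n ^ M ⊆ 𝒢.Kn n ^ M' :=
  Set.pow_subset_pow_right (𝒢.one_mem_Kn n) h

lemma SQ_inv : (𝒢.SQ U)⁻¹ = 𝒢.SQ U := by
  have key : ∀ x : 𝒢.Q U, x ∈ 𝒢.SQ U → x⁻¹ ∈ 𝒢.SQ U := by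
    rintro x ⟨a, b, rfl⟩
    exact ⟨b, a, by group⟩
  ext x
  rw [Set.mem_inv]
  exact ⟨fun h => by simpa using key _ h, fun h => key _ h⟩

lemma SQ_pow_inv (N : ℕ) : ((𝒢.SQ U) ^ N)⁻¹ = (𝒢.SQ U) ^ N := by
  rw [← inv_pow, 𝒢.SQ_inv U]

lemma mk_mem_SQ_pow {N : ℕ} {p : ∀ n, 𝒢.G n} (hp : ∀ n, p n ∈ 𝒢.Kn n ^ N) :
    (QuotientGroup.mk p : 𝒢.Q U) ∈ (𝒢.SQ U) ^ N := by
  classical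
  induction N generalizing p with
  | zero =>
      have : p = 1 := funext fun n => by simpa using (hp n)
      rw [this, pow_zero]
      simp [QuotientGroup.mk_one]
  | succ N ih =>
      have hp' : ∀ n, ∃ q ∈ 𝒢.Kn n ^ N, ∃ r ∈ 𝒢.Kn n, q * r = p n := by
        intro n
        have := hp n
        rwa [pow_succ, Set.mem_mul] at this
      choose q hq r hr hqr using hp'
      have hsplit : p = q * r := funext fun n => (hqr n).symm
      rw [hsplit, QuotientGroup.mk_mul, pow_succ]
      refine Set.mul_mem_mul (ih hq) ?_
      choose a b hab using hr
      have hr' : r = fun n => (a n)⁻¹ * (b n)⁻¹ * a n * b n := funext hab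
      refine ⟨QuotientGroup.mk a, QuotientGroup.mk b, ?_⟩
      rw [hr']
      rfl

lemma rep_of_mem_SQ_pow {N : ℕ} {x : 𝒢.Q U} (hx : x ∈ (𝒢.SQ U) ^ N) :
    ∃ p : ∀ n, 𝒢.G n, (∀ n, p n ∈ 𝒢.Kn n ^ N) ∧ (QuotientGroup.mk p : 𝒢.Q U) = x := by
  induction N generalizing x with
  | zero =>
      rw [pow_zero] at hx
      refine ⟨1, fun n => by simp [pow_zero], ?_⟩
      rw [Set.mem_one] at hx
      rw [hx]
      exact QuotientGroup.mk_one _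
  | succ N ih =>
      rw [pow_succ, Set.mem_mul] at hx
      obtain ⟨y, hy, z, hz, rfl⟩ := hx
      obtain ⟨p, hp, rfl⟩ := ih hy
      obtain ⟨a, b, rfl⟩ := hz
      obtain ⟨α, rfl⟩ := QuotientGroup.mk_surjective a
      obtain ⟨β, rfl⟩ := QuotientGroup.mk_surjective b
      refine ⟨p * fun n => (α n)⁻¹ * (β n)⁻¹ * α n * β n, fun n => ?_, ?_⟩
      · rw [pow_succ]
        exact Set.mul_mem_mul (hp n) ⟨α n, β n, rfl⟩
      · simp only [QuotientGroup.mk_mul, QuotientGroup.mk_inv]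
        rfl

end PMFamily
private lemma memU_of_cofinite {U : Ultrafilter ℕ} (hU : (U : Filter ℕ) ≤ Filter.cofinite)
    {s : Set ℕ} (h : s ∈ Filter.atTop) : s ∈ U := by
  rw [← Nat.cofinite_eq_atTop] at h
  exact hU h

namespace PMFamily

variable (𝒢 : PMFamily) (U : Ultrafilter ℕ)

lemma exists_near {g : ∀ n, 𝒢.G n} {M : ℕ} {δ : ℝ≥0∞}
    (h : {n | ∃ p ∈ 𝒢.Kn n ^ M, 𝒢.ν n ((g n)⁻¹ * p) < δ} ∈ U) :
    ∃ q ∈ (𝒢.SQ U) ^ M, edist (QuotientGroup.mk g : 𝒢.Q U) q ≤ δ := by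
  classical
  set p : ∀ n, 𝒢.G n := fun n =>
    if hn : ∃ p ∈ 𝒢.Kn n ^ M, 𝒢.ν n ((g n)⁻¹ * p) < δ then hn.choose else 1 with hp
  have hpmem : ∀ n, p n ∈ 𝒢.Kn n ^ M := by
    intro n
    rw [hp]
    dsimp only
    split
    · next hn => exact hn.choose_spec.1
    · exact 𝒢.one_mem_Kn_pow n M
  refine ⟨QuotientGroup.mk p, 𝒢.mk_mem_SQ_pow U hpmem, ?_⟩
  rw [𝒢.edist_mk U]
  refine limsup_le_of_memU (Filter.mem_of_superset h ?_)
  intro n hn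
  have : 𝒢.ν n ((g n)⁻¹ * p n) < δ := by
    have hn' : ∃ p ∈ 𝒢.Kn n ^ M, 𝒢.ν n ((g n)⁻¹ * p) < δ := hn
    rw [hp]; dsimp only; rw [dif_pos hn']
    exact hn'.choose_spec.2
  exact le_of_lt this

lemma mem_SQ_pow_of_forall {C : ℝ≥0∞} (hC : C ≠ ⊤) (hCb : ∀ n (g : 𝒢.G n), 𝒢.ν n g ≤ C)
    (hU : (U : Filter ℕ) ≤ Filter.cofinite) {g : ∀ n, 𝒢.G n} {M : ℕ}
    (h : ∀ δ : ℝ≥0∞, 0 < δ → {n | ∃ p ∈ 𝒢.Kn n ^ M, 𝒢.ν n ((g n)⁻¹ * p) < δ} ∈ U) :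
    (QuotientGroup.mk g : 𝒢.Q U) ∈ (𝒢.SQ U) ^ M := by
  classical
  set t : ℕ → ℝ≥0∞ := fun n => sInf ((fun p => 𝒢.ν n ((g n)⁻¹ * p)) '' (𝒢.Kn n ^ M)) with ht
  have htC : ∀ n, t n ≤ C := by
    intro n
    have h1 : 𝒢.ν n ((g n)⁻¹ * 1) ∈ (fun p => 𝒢.ν n ((g n)⁻¹ * p)) '' (𝒢.Kn n ^ M) :=
      ⟨1, 𝒢.one_mem_Kn_pow n M, rfl⟩
    refine le_trans (sInf_le h1) ?_
    rw [mul_one]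
    exact hCb n _
  have hlt : ∀ n, t n < t n + (2⁻¹ : ℝ≥0∞) ^ n := fun n =>
    ENNReal.lt_add_right (lt_of_le_of_lt (htC n) (lt_top_iff_ne_top.mpr hC)).ne
      (pow_ne_zero n (ENNReal.inv_ne_zero.mpr ENNReal.ofNat_ne_top))
  have hchoice : ∀ n, ∃ p ∈ 𝒢.Kn n ^ M, 𝒢.ν n ((g n)⁻¹ * p) < t n + (2⁻¹ : ℝ≥0∞) ^ n := by
    intro n
    have h2 : sInf ((fun p => 𝒢.ν n ((g n)⁻¹ * p)) '' (𝒢.Kn n ^ M)) <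
        t n + (2⁻¹ : ℝ≥0∞) ^ n := hlt n
    obtain ⟨v, hv, hvlt⟩ := sInf_lt_iff.mp h2
    obtain ⟨p, hpmem, rfl⟩ := hv
    exact ⟨p, hpmem, hvlt⟩
  choose p hpmem hplt using hchoice
  have hE : g⁻¹ * p ∈ 𝒢.E U := by
    intro ε hε
    have hε2 : (0 : ℝ≥0∞) < ε / 2 := ENNReal.half_pos hε.ne'
    have hA : {n | t n < ε / 2} ∈ U := by
      refine Filter.mem_of_superset (h (ε / 2) hε2) ?_
      rintro n ⟨q, hqmem, hqlt⟩
      have hq : 𝒢.ν n ((g n)⁻¹ * q) ∈ (fun p => 𝒢.ν n ((g n)⁻¹ * p)) '' (𝒢.Kn n ^ M) :=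
        ⟨q, hqmem, rfl⟩
      exact lt_of_le_of_lt (sInf_le hq) hqlt
    have hB : {n | (2⁻¹ : ℝ≥0∞) ^ n < ε / 2} ∈ U := by
      refine memU_of_cofinite hU ?_
      have := (ENNReal.tendsto_pow_atTop_nhds_zero_of_lt_one
        (by norm_num : (2⁻¹ : ℝ≥0∞) < 1)).eventually_lt_const hε2
      exact this
    refine Filter.mem_of_superset (Filter.inter_mem hA hB) ?_
    rintro n ⟨hn1, hn2⟩
    have : 𝒢.ν n ((g n)⁻¹ * p n) < ε / 2 + ε / 2 :=
      lt_trans (hplt n) (ENNReal.add_lt_add hn1 hn2)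
    rw [ENNReal.add_halves] at this
    exact this
  have : (QuotientGroup.mk g : 𝒢.Q U) = QuotientGroup.mk p := QuotientGroup.eq.mpr hE
  rw [this]
  exact 𝒢.mk_mem_SQ_pow U hpmem

lemma isClosed_SQ_pow {C : ℝ≥0∞} (hC : C ≠ ⊤) (hCb : ∀ n (g : 𝒢.G n), 𝒢.ν n g ≤ C)
    (hU : (U : Filter ℕ) ≤ Filter.cofinite) (N : ℕ) : IsClosed ((𝒢.SQ U) ^ N) := by
  refine isClosed_of_closure_subset fun x hx => ?_
  obtain ⟨g, rfl⟩ := QuotientGroup.mk_surjective x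
  refine 𝒢.mem_SQ_pow_of_forall U hC hCb hU fun δ hδ => ?_
  obtain ⟨q, hq, hlt⟩ := EMetric.mem_closure_iff.mp hx δ hδ
  obtain ⟨p, hpmem, rfl⟩ := 𝒢.rep_of_mem_SQ_pow U hq
  rw [𝒢.edist_mk U] at hlt
  refine Filter.mem_of_superset (memU_of_limsup_lt hlt) ?_
  intro n hn
  exact ⟨p n, hpmem n, hn⟩

end PMFamily
private lemma geom_partial_sum (K m : ℕ) :
    (∑ j ∈ Finset.range m, (2⁻¹ : ℝ≥0∞) ^ (K + j)) ≤ 2 * (2⁻¹ : ℝ≥0∞) ^ K := by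
  have h1 : (∑ j ∈ Finset.range m, (2⁻¹ : ℝ≥0∞) ^ (K + j))
      = (2⁻¹ : ℝ≥0∞) ^ K * ∑ j ∈ Finset.range m, (2⁻¹ : ℝ≥0∞) ^ j := by
    rw [Finset.mul_sum]
    exact Finset.sum_congr rfl fun j _ => pow_add _ K j
  have h2 : (∑ j ∈ Finset.range m, (2⁻¹ : ℝ≥0∞) ^ j) ≤ 2 := by
    refine le_trans (ENNReal.sum_le_tsum _) ?_
    rw [ENNReal.tsum_geometric, ENNReal.one_sub_inv_two, inv_inv]
  rw [h1, mul_comm]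
  exact mul_le_mul_left h2 _

namespace PMFamily

variable (𝒢 : PMFamily) (U : Ultrafilter ℕ)

lemma completeQ (hU : (U : Filter ℕ) ≤ Filter.cofinite) : CompleteSpace (𝒢.Q U) := by
  classical
  refine EMetric.complete_of_convergent_controlled_sequences
    (fun k => (2⁻¹ : ℝ≥0∞) ^ k)
    (fun k => zero_lt_iff.mpr (pow_ne_zero k (ENNReal.inv_ne_zero.mpr ENNReal.ofNat_ne_top))) fun u hu => ?_
  set g : ℕ → ∀ n, 𝒢.G n := fun k => (u k).out with hg
  have hmk : ∀ k, (QuotientGroup.mk (g k) : 𝒢.Q U) = u k := fun k => QuotientGroup.out_eq' _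
  set A : ℕ → Set ℕ := fun k => {n | 𝒢.ν n ((g k n)⁻¹ * g (k+1) n) < (2⁻¹ : ℝ≥0∞) ^ k} with hA
  have hAU : ∀ k, A k ∈ U := by
    intro k
    have h1 : edist (u k) (u (k+1)) < (2⁻¹ : ℝ≥0∞) ^ k := hu k k (k+1) le_rfl (Nat.le_succ k)
    rw [← hmk k, ← hmk (k+1), 𝒢.edist_mk U] at h1
    exact memU_of_limsup_lt h1
  set κ : ℕ → ℕ := fun n => Nat.findGreatest (fun k => ∀ j < k, n ∈ A j) n with hκ
  set y : ∀ n, 𝒢.G n := fun n => g (κ n) n with hy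
  have tele : ∀ (n m K : ℕ), (∀ j, K ≤ j → j < K + m → n ∈ A j) →
      𝒢.ν n ((g K n)⁻¹ * g (K + m) n) ≤ ∑ j ∈ Finset.range m, (2⁻¹ : ℝ≥0∞) ^ (K + j) := by
    intro n m
    induction m with
    | zero =>
        intro K _
        simp only [Nat.add_zero, Finset.range_zero, Finset.sum_empty, inv_mul_cancel]
        exact le_of_eq (𝒢.norm_one n)
    | succ m ih =>
        intro K hK
        have h1 : 𝒢.ν n ((g K n)⁻¹ * g (K+1) n) < (2⁻¹ : ℝ≥0∞) ^ K :=
          hK K le_rfl (by omega)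
        have h2 := ih (K+1) (fun j hj1 hj2 => hK j (by omega) (by omega))
        have hsplit : (g K n)⁻¹ * g (K + (m+1)) n
            = ((g K n)⁻¹ * g (K+1) n) * ((g (K+1) n)⁻¹ * g ((K+1) + m) n) := by
          rw [show K + (m+1) = (K+1) + m by omega]
          group
        rw [hsplit]
        refine le_trans (𝒢.norm_mul n _ _) ?_
        have hsum : (∑ j ∈ Finset.range (m+1), (2⁻¹ : ℝ≥0∞) ^ (K + j))
            = (∑ j ∈ Finset.range m, (2⁻¹ : ℝ≥0∞) ^ ((K+1) + j)) + (2⁻¹ : ℝ≥0∞) ^ K := by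
          rw [Finset.sum_range_succ' (fun j => (2⁻¹ : ℝ≥0∞) ^ (K + j)) m]
          simp only [Nat.add_zero]
          congr 1
          exact Finset.sum_congr rfl fun j _ => by rw [show K + (j+1) = (K+1) + j by omega]
        rw [hsum]
        calc 𝒢.ν n ((g K n)⁻¹ * g (K+1) n) + 𝒢.ν n ((g (K+1) n)⁻¹ * g ((K+1)+m) n)
            = 𝒢.ν n ((g (K+1) n)⁻¹ * g ((K+1)+m) n) + 𝒢.ν n ((g K n)⁻¹ * g (K+1) n) :=
              add_comm _ _
          _ ≤ _ := add_le_add h2 (le_of_lt h1)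
  have hbd : ∀ K, edist (u K) (QuotientGroup.mk y : 𝒢.Q U) ≤ 2 * (2⁻¹ : ℝ≥0∞) ^ K := by
    intro K
    rw [← hmk K, 𝒢.edist_mk U]
    have hT : ({n | K ≤ n} ∩ ⋂ j ∈ Finset.range K, A j) ∈ U := by
      refine Filter.inter_mem (memU_of_cofinite hU (Filter.mem_atTop K)) ?_
      exact (Filter.biInter_finset_mem _).mpr fun j _ => hAU j
    refine limsup_le_of_memU (Filter.mem_of_superset hT ?_)
    rintro n ⟨hn1, hn2⟩
    have hn1' : K ≤ n := hn1
    have hPK : ∀ j < K, n ∈ A j := by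
      intro j hj
      simp only [Set.mem_iInter] at hn2
      exact hn2 j (Finset.mem_range.mpr hj)
    have hκK : K ≤ κ n := Nat.le_findGreatest hn1' hPK
    have hPκ : ∀ j < κ n, n ∈ A j :=
      Nat.findGreatest_spec (P := fun k => ∀ j < k, n ∈ A j) (Nat.zero_le n)
        (fun j hj => absurd hj (Nat.not_lt_zero j))
    have htel := tele n (κ n - K) K (fun j hj1 hj2 => hPκ j (by omega))
    rw [show K + (κ n - K) = κ n by omega] at htel
    exact le_trans htel (geom_partial_sum K _)
  refine ⟨QuotientGroup.mk y, ?_⟩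
  rw [EMetric.tendsto_atTop]
  intro ε hε
  have htend : Filter.Tendsto (fun K => 2 * (2⁻¹ : ℝ≥0∞) ^ K) Filter.atTop (nhds 0) := by
    have h0 := ENNReal.tendsto_pow_atTop_nhds_zero_of_lt_one
      (by norm_num : (2⁻¹ : ℝ≥0∞) < 1)
    have := ENNReal.Tendsto.const_mul h0 (Or.inr (ENNReal.ofNat_ne_top (n := 2)))
    simpa using this
  obtain ⟨N, hN⟩ := Filter.eventually_atTop.mp (htend.eventually_lt_const hε)
  exact ⟨N, fun n hn => lt_of_le_of_lt (hbd n) (hN n hn)⟩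

end PMFamily

/-- uniform perfectness, bounded case. If the norms are uniformly bounded
and the metric ultraproduct is perfect (every element is a product of commutators), then it is
uniformly perfect: there is `N` such that every element is a product of `N` commutators. -/
theorem statement5 (𝒢 : PMFamily)
    (hmetric : ∀ n (g : 𝒢.G n), 𝒢.ν n g = 0 ↔ g = 1)
    (U : Ultrafilter ℕ) (hU : (U : Filter ℕ) ≤ Filter.cofinite)
    (hbdd : ∃ C : ℝ≥0∞, C ≠ ⊤ ∧ ∀ n (g : 𝒢.G n), 𝒢.ν n g ≤ C)
    (hperf : ∀ g : 𝒢.Q U, ∃ m : ℕ,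
      g ∈ ({x | ∃ a b : 𝒢.Q U, x = a⁻¹ * b⁻¹ * a * b} : Set (𝒢.Q U)) ^ m) :
    ∃ N : ℕ, ∀ g : 𝒢.Q U,
      g ∈ ({x | ∃ a b : 𝒢.Q U, x = a⁻¹ * b⁻¹ * a * b} : Set (𝒢.Q U)) ^ N := by
  classical
  obtain ⟨C, hCtop, hCb⟩ := hbdd
  have hperf' : ∀ g : 𝒢.Q U, ∃ m : ℕ, g ∈ (𝒢.SQ U) ^ m := hperf
  suffices h : ∃ N : ℕ, ∀ g : 𝒢.Q U, g ∈ (𝒢.SQ U) ^ N from h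
  haveI : CompleteSpace (𝒢.Q U) := 𝒢.completeQ U hU
  have hclosed : ∀ N : ℕ, IsClosed ((𝒢.SQ U) ^ N) := fun N =>
    𝒢.isClosed_SQ_pow U hCtop hCb hU N
  have hcover : (⋃ N : ℕ, (𝒢.SQ U) ^ N) = Set.univ := by
    refine Set.eq_univ_of_forall fun x => ?_
    obtain ⟨m, hm⟩ := hperf' x
    exact Set.mem_iUnion.mpr ⟨m, hm⟩
  haveI : Nonempty (𝒢.Q U) := ⟨1⟩
  obtain ⟨N₀, x₀, hx₀⟩ := nonempty_interior_of_iUnion_of_closed hclosed hcover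
  rw [mem_interior_iff_mem_nhds, EMetric.mem_nhds_iff] at hx₀
  obtain ⟨ε₀, hε₀pos, hball₀⟩ := hx₀
  set ε : ℝ≥0∞ := min ε₀ 1 with hε
  have hεpos : 0 < ε := lt_min hε₀pos zero_lt_one
  have hεtop : ε ≠ ⊤ := ne_of_lt (lt_of_le_of_lt (min_le_right _ _) ENNReal.one_lt_top)
  have hball : Metric.eball x₀ ε ⊆ (𝒢.SQ U) ^ N₀ := fun z hz =>
    hball₀ (EMetric.ball_subset_ball (min_le_left _ _) hz)
  have hx₀mem : x₀ ∈ (𝒢.SQ U) ^ N₀ := hball (EMetric.mem_ball_self hεpos)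
  have hsmall : ∀ z : 𝒢.Q U, 𝒢.qnorm U z < ε → z ∈ (𝒢.SQ U) ^ (N₀ + N₀) := by
    intro z hz
    have h1 : x₀ * z ∈ (𝒢.SQ U) ^ N₀ := by
      apply hball
      have he : edist (x₀ * z) x₀ = 𝒢.qnorm U z := by
        rw [𝒢.edist_def U, show (x₀ * z)⁻¹ * x₀ = z⁻¹ by group]
        exact 𝒢.qnorm_inv U z
      rw [EMetric.mem_ball, he]
      exact hz
    have h2 : x₀⁻¹ ∈ (𝒢.SQ U) ^ N₀ := by
      rw [← 𝒢.SQ_pow_inv U N₀]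
      exact Set.inv_mem_inv.mpr hx₀mem
    rw [show z = x₀⁻¹ * (x₀ * z) by group, pow_add]
    exact Set.mul_mem_mul h2 h1
  by_cases hD : ∃ M : ℕ, ∀ x : 𝒢.Q U, ∃ q ∈ (𝒢.SQ U) ^ M, edist x q < ε
  · obtain ⟨M, hM⟩ := hD
    refine ⟨M + (N₀ + N₀), fun x => ?_⟩
    obtain ⟨q, hq, hlt⟩ := hM x
    have h1 : q⁻¹ * x ∈ (𝒢.SQ U) ^ (N₀ + N₀) := by
      apply hsmall
      have he : 𝒢.qnorm U (q⁻¹ * x) = edist x q := by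
        rw [𝒢.edist_def U, ← 𝒢.qnorm_inv U (x⁻¹ * q)]
        congr 1
        group
      rw [he]
      exact hlt
    rw [show x = q * (q⁻¹ * x) by group, pow_add]
    exact Set.mul_mem_mul hq h1
  · exfalso
    push_neg at hD
    choose x hx using hD
    set gM : ℕ → ∀ n, 𝒢.G n := fun M => (x M).out with hgM
    have hmkM : ∀ M, (QuotientGroup.mk (gM M) : 𝒢.Q U) = x M := fun M =>
      QuotientGroup.out_eq' _
    have hε2 : (0 : ℝ≥0∞) < ε / 2 := ENNReal.half_pos hεpos.ne'
    set B : ℕ → Set ℕ := fun M =>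
      {n | ∀ p ∈ 𝒢.Kn n ^ M, ε / 2 ≤ 𝒢.ν n ((gM M n)⁻¹ * p)} with hB
    have hBU : ∀ M, B M ∈ U := by
      intro M
      by_contra hc
      have hcompl : (B M)ᶜ ∈ U := Ultrafilter.compl_mem_iff_notMem.mpr hc
      have hsub : (B M)ᶜ ⊆ {n | ∃ p ∈ 𝒢.Kn n ^ M, 𝒢.ν n ((gM M n)⁻¹ * p) < ε / 2} := by
        intro n hn
        simp only [hB, Set.mem_compl_iff, Set.mem_setOf_eq, not_forall, not_le] at hn
        obtain ⟨p, hp1, hp2⟩ := hn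
        exact ⟨p, hp1, hp2⟩
      obtain ⟨q, hq, hle⟩ := 𝒢.exists_near U (Filter.mem_of_superset hcompl hsub)
      rw [hmkM M] at hle
      exact absurd (lt_of_le_of_lt hle (ENNReal.half_lt_self hεpos.ne' hεtop))
        (not_lt.mpr (hx M q hq))
    set κ : ℕ → ℕ := fun n => Nat.findGreatest (fun k => n ∈ B k) n with hκ
    set y : ∀ n, 𝒢.G n := fun n => gM (κ n) n with hy
    obtain ⟨m, hm⟩ := hperf' (QuotientGroup.mk y)
    obtain ⟨p, hpmem, hpeq⟩ := 𝒢.rep_of_mem_SQ_pow U hm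
    have hEyp : y⁻¹ * p ∈ 𝒢.E U := QuotientGroup.eq.mp hpeq.symm
    have hsmallset : {n | 𝒢.ν n ((y n)⁻¹ * p n) < ε / 2} ∈ U := hEyp (ε / 2) hε2
    have hT : ({n | m ≤ n} ∩ B m) ∈ U :=
      Filter.inter_mem (memU_of_cofinite hU (Filter.mem_atTop m)) (hBU m)
    obtain ⟨n, hn⟩ := Ultrafilter.nonempty_of_mem (Filter.inter_mem hT hsmallset)
    obtain ⟨⟨hn1, hn2⟩, hn3⟩ := hn
    have hn1' : m ≤ n := hn1
    have hκm : m ≤ κ n := Nat.le_findGreatest hn1' hn2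
    have hκB : n ∈ B (κ n) := Nat.findGreatest_spec (P := fun k => n ∈ B k) hn1' hn2
    have hple : p n ∈ 𝒢.Kn n ^ (κ n) := 𝒢.Kn_pow_mono n hκm (hpmem n)
    have hge : ε / 2 ≤ 𝒢.ν n ((y n)⁻¹ * p n) := hκB (p n) hple
    exact absurd (show 𝒢.ν n ((y n)⁻¹ * p n) < ε / 2 from hn3) (not_lt.mpr hge)
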